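/- Let (G,X) be a minimal topological dynamical system with X a compact metrizable space, and let d ≥ 1. Then there is a dense Gδ subset X₀ ⊆ X such that Y_x^[d](X) = C_x^[d](X) for every x ∈ X₀. -/

import Mathlib

/-- Generators of the Host–Kra cube group: `[h]_F` for `F` a hyperface `{ω : ω i = a}`. -/
def hyperfaceGens (G : Type*) [Group G] (d : ℕ) : Set ((Fin d → Bool) → G) :=
  {g | ∃ (h : G) (i : Fin d) (a : Bool), g = fun ω => if ω i = a then h else 1}

/-- Generators of the face cube group: `[h]_F` for `F` an upper hyperface `{ω : ω i = 1}`. -/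
def upperFaceGens (G : Type*) [Group G] (d : ℕ) : Set ((Fin d → Bool) → G) :=
  {g | ∃ (h : G) (i : Fin d), g = fun ω => if ω i = true then h else 1}

/-- The Host–Kra cube group `HK^[d]`. -/
def HK (G : Type*) [Group G] (d : ℕ) : Subgroup ((Fin d → Bool) → G) :=
  Subgroup.closure (hyperfaceGens G d)

/-- The face cube group `F^[d]`. -/
def FG (G : Type*) [Group G] (d : ℕ) : Subgroup ((Fin d → Bool) → G) :=
  Subgroup.closure (upperFaceGens G d)

/-- Coordinatewise action of `G^[d]` on `X^[d]`. -/
def cubeAct {G X : Type*} [Group G] [MulAction G X] {d : ℕ}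
    (g : (Fin d → Bool) → G) (c : (Fin d → Bool) → X) : (Fin d → Bool) → X :=
  fun ω => g ω • c ω

/-- The dynamical cubespace `C_G^[d](X)`: the closure of the set of `HK^[d]`-translates
of constant configurations. -/
def cubeSpace (G X : Type*) [Group G] [MulAction G X] [TopologicalSpace X] (d : ℕ) :
    Set ((Fin d → Bool) → X) :=
  closure {c | ∃ g ∈ HK G d, ∃ x : X, c = cubeAct g (fun _ => x)}

/-- The lower corner `⌞^[d](x,y)`: value `y` at `1⃗`, value `x` elsewhere. -/
def lowerCorner {X : Type*} (d : ℕ) (x y : X) : (Fin d → Bool) → X :=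
  fun ω => if ω = (fun _ => true) then y else x

/-- The upper corner `⌝^[d](x,y)`: value `x` at `0⃗`, value `y` elsewhere. -/
def upperCorner {X : Type*} (d : ℕ) (x y : X) : (Fin d → Bool) → X :=
  fun ω => if ω = (fun _ => false) then x else y

/-- The nilpotent regionally proximal relation of order `d`. -/
def NRP (G X : Type*) [Group G] [MulAction G X] [TopologicalSpace X] (d : ℕ) :
    Set (X × X) :=
  {p | lowerCorner (d + 1) p.1 p.2 ∈ cubeSpace G X (d + 1)}

/-- `Y_x^[d](X)`: the closure of the `F^[d]`-orbit of the constant configuration `x^[d]`. -/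
def Yx (G : Type*) {X : Type*} [Group G] [MulAction G X] [TopologicalSpace X]
    (d : ℕ) (x : X) : Set ((Fin d → Bool) → X) :=
  closure {c | ∃ f ∈ FG G d, c = cubeAct f (fun _ => x)}

/-- `C_x^[d](X)`: cubes whose value at `0⃗` is `x`. -/
def Cx (G : Type*) {X : Type*} [Group G] [MulAction G X] [TopologicalSpace X]
    (d : ℕ) (x : X) : Set ((Fin d → Bool) → X) :=
  {c ∈ cubeSpace G X d | c (fun _ => false) = x}

section Aux

variable {G : Type*} [Group G] {d : ℕ}

/-- Elements of the face group are the identity at `0⃗`. -/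
lemma fg_apply_zero {f : (Fin d → Bool) → G} (hf : f ∈ FG G d) :
    f (fun _ => false) = 1 := by
  induction hf using Subgroup.closure_induction with
  | mem g hg => obtain ⟨h, i, rfl⟩ := hg; simp
  | one => rfl
  | mul x y _ _ hx hy => simp [Pi.mul_apply, hx, hy]
  | inv x _ hx => simp [Pi.inv_apply, hx]

/-- The diagonal normalizes the face group. -/
lemma conj_mem_FG (h : G) {f : (Fin d → Bool) → G} (hf : f ∈ FG G d) :
    (fun _ => h) * f * (fun _ => h)⁻¹ ∈ FG G d := by
  induction hf using Subgroup.closure_induction with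
  | mem g hg =>
    obtain ⟨k, i, rfl⟩ := hg
    apply Subgroup.subset_closure
    refine ⟨h * k * h⁻¹, i, ?_⟩
    funext ω
    by_cases hω : ω i = true <;> simp [hω]
  | one => simpa using one_mem _
  | mul x y hx' hy' hx hy =>
    have : (fun _ : Fin d → Bool => h) * (x * y) * (fun _ => h)⁻¹ =
        ((fun _ => h) * x * (fun _ => h)⁻¹) * ((fun _ => h) * y * (fun _ => h)⁻¹) := by
      group
    rw [this]; exact mul_mem hx hy
  | inv x hx' hx =>
    have : (fun _ : Fin d → Bool => h) * x⁻¹ * (fun _ => h)⁻¹ =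
        ((fun _ => h) * x * (fun _ => h)⁻¹)⁻¹ := by group
    rw [this]; exact inv_mem hx

/-- Every element of the Host–Kra group is a face-group element times a diagonal. -/
lemma hk_decomp {g : (Fin d → Bool) → G} (hg : g ∈ HK G d) :
    ∃ f ∈ FG G d, ∃ h : G, g = f * (fun _ => h) := by
  induction hg using Subgroup.closure_induction with
  | mem g hg =>
    obtain ⟨k, i, a, rfl⟩ := hg
    cases a with
    | true =>
      exact ⟨_, Subgroup.subset_closure ⟨k, i, rfl⟩, 1, by funext ω; simp⟩
    | false =>
      refine ⟨fun ω => if ω i = true then k⁻¹ else 1,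
        Subgroup.subset_closure ⟨k⁻¹, i, rfl⟩, k, ?_⟩
      funext ω
      by_cases hω : ω i = true <;> simp [hω, Pi.mul_apply]
  | one => exact ⟨1, one_mem _, 1, by funext ω; simp⟩
  | mul x y hx' hy' hx hy =>
    obtain ⟨f₁, hf₁, h₁, rfl⟩ := hx
    obtain ⟨f₂, hf₂, h₂, rfl⟩ := hy
    refine ⟨f₁ * ((fun _ => h₁) * f₂ * (fun _ => h₁)⁻¹),
      mul_mem hf₁ (conj_mem_FG h₁ hf₂), h₁ * h₂, ?_⟩
    have : (fun _ : Fin d → Bool => h₁ * h₂) = (fun _ => h₁) * (fun _ => h₂) := rfl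
    rw [this]; group
  | inv x hx' hx =>
    obtain ⟨f, hf, h, rfl⟩ := hx
    refine ⟨(fun _ => h⁻¹) * f⁻¹ * (fun _ => h⁻¹)⁻¹,
      conj_mem_FG h⁻¹ (inv_mem hf), h⁻¹, ?_⟩
    have : (fun _ : Fin d → Bool => h⁻¹) = (fun _ => h)⁻¹ := rfl
    rw [this]; group

variable {X : Type*} [MulAction G X]

lemma cubeAct_mul_diag (f : (Fin d → Bool) → G) (h : G) (x : X) :
    cubeAct (f * (fun _ => h)) (fun _ => x) = cubeAct f (fun _ => h • x) := by
  funext ω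
  simp [cubeAct, Pi.mul_apply, mul_smul]

lemma FG_le_HK : FG G d ≤ HK G d := by
  apply Subgroup.closure_mono
  rintro g ⟨h, i, rfl⟩
  exact ⟨h, i, true, rfl⟩

variable [TopologicalSpace X] [T2Space X]

lemma Yx_subset_Cx (x : X) : Yx G d x ⊆ Cx G d x := by
  intro c hc
  constructor
  · refine closure_mono ?_ hc
    rintro c' ⟨f, hf, rfl⟩
    exact ⟨f, FG_le_HK hf, x, rfl⟩
  · have hcl : IsClosed {c' : (Fin d → Bool) → X | c' (fun _ => false) = x} :=
      isClosed_eq (continuous_apply _) continuous_const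
    refine closure_minimal ?_ hcl hc
    rintro c' ⟨f, hf, rfl⟩
    simp [cubeAct, fg_apply_zero hf]

end Aux

/-- For a minimal t.d.s. on a compact metrizable space, `Y_x^[d](X) = C_x^[d](X)` for
all `x` in a dense `Gδ` subset of `X`. -/
theorem Yx_eq_Cx_generic
    {G X : Type*} [Group G] [TopologicalSpace G] [IsTopologicalGroup G]
    [TopologicalSpace X] [CompactSpace X] [T2Space X]
    [MulAction G X] [ContinuousSMul G X]
    [TopologicalSpace.MetrizableSpace X]
    {d : ℕ} (hd : 1 ≤ d)
    (hmin : ∀ x : X, Dense (MulAction.orbit G x)) :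
    ∃ X₀ : Set X, Dense X₀ ∧ IsGδ X₀ ∧ ∀ x ∈ X₀, Yx G d x = Cx G d x := by
  classical
  haveI : SecondCountableTopology X := by
    letI := TopologicalSpace.metrizableSpaceMetric X
    infer_instance
  obtain ⟨B, hBc, -, hB⟩ :=
    TopologicalSpace.exists_countable_basis ((Fin d → Bool) → X)
  -- the set of points whose face-orbit meets `U`
  set A : Set ((Fin d → Bool) → X) → Set X :=
    fun U => ⋃ f ∈ FG G d, (fun x : X => cubeAct f (fun _ => x)) ⁻¹' U with hA
  have hcont : ∀ f : (Fin d → Bool) → G,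
      Continuous fun x : X => cubeAct f (fun _ => x) :=
    fun f => continuous_pi fun ω => continuous_id.const_smul (f ω)
  have hAopen : ∀ U ∈ B, IsOpen (A U) := fun U hU =>
    isOpen_biUnion fun f _ => (hB.isOpen hU).preimage (hcont f)
  refine ⟨⋂ U ∈ B, (A U ∪ interior (A U)ᶜ), ?_, ?_, ?_⟩
  · refine dense_biInter_of_isOpen
      (fun U hU => (hAopen U hU).union isOpen_interior) hBc ?_
    intro U hU
    rw [dense_iff_inter_open]
    intro V hV hVne
    by_cases hVA : (V ∩ A U).Nonempty
    · exact hVA.mono (Set.inter_subset_inter_right V Set.subset_union_left)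
    · obtain ⟨v, hv⟩ := hVne
      refine ⟨v, hv, Or.inr ?_⟩
      have hVsub : V ⊆ (A U)ᶜ := by
        intro w hw hwA
        exact hVA ⟨w, hw, hwA⟩
      exact interior_maximal hVsub hV hv
  · exact IsGδ.biInter hBc fun U hU =>
      ((hAopen U hU).union isOpen_interior).isGδ
  · intro x hx
    refine Set.Subset.antisymm (Yx_subset_Cx x) ?_
    intro c hc
    by_contra hcY
    have hYcl : IsClosed (Yx G d x) := isClosed_closure
    obtain ⟨U, hU, hcU, hUsub⟩ :=
      hB.exists_subset_of_mem_open (show c ∈ (Yx G d x)ᶜ from hcY) hYcl.isOpen_compl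
    -- `x ∉ A U`
    have hxA : x ∉ A U := by
      intro hxA
      rw [hA, Set.mem_iUnion₂] at hxA
      obtain ⟨f, hf, hfU⟩ := hxA
      exact hUsub hfU (subset_closure ⟨f, hf, rfl⟩)
    have hxint : x ∈ interior (A U)ᶜ := by
      have := Set.mem_iInter₂.mp hx U hU
      rcases this with h | h
      · exact absurd h hxA
      · exact h
    -- find a face-orbit point in `U` with base point in `interior (A U)ᶜ`
    set W : Set ((Fin d → Bool) → X) :=
      U ∩ (fun c' : (Fin d → Bool) → X => c' (fun _ => false)) ⁻¹' interior (A U)ᶜ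
      with hW
    have hWopen : IsOpen W :=
      (hB.isOpen hU).inter (isOpen_interior.preimage (continuous_apply _))
    have hcW : c ∈ W := ⟨hcU, by rw [Set.mem_preimage, hc.2]; exact hxint⟩
    obtain ⟨s, hsW, hsS⟩ := _root_.mem_closure_iff.mp hc.1 W hWopen hcW
    obtain ⟨g, hg, z, rfl⟩ := hsS
    obtain ⟨f, hf, h, rfl⟩ := hk_decomp hg
    rw [cubeAct_mul_diag] at hsW
    set y := h • z
    have hy0 : cubeAct f (fun _ => y) (fun _ => false) = y := by
      simp [cubeAct, fg_apply_zero hf]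
    have hyint : y ∈ interior (A U)ᶜ := by
      have := hsW.2
      rwa [Set.mem_preimage, hy0] at this
    have hyA : y ∈ A U := by
      rw [hA, Set.mem_iUnion₂]
      exact ⟨f, hf, hsW.1⟩
    exact interior_subset hyint hyA
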